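/- Let k be an algebraically closed field, let A be an m₁×m₁ matrix over k with characteristic polynomial ∏ᵢ (t − αᵢ), and let B be an m₂×m₂ matrix over k with characteristic polynomial ∏ⱼ (t − βⱼ). Then the k-linear endomorphism P_{A,B} : X ↦ X·B − A·X of the space of m₁×m₂ matrices over k has characteristic polynomial ∏_{i,j} (t − βⱼ + αᵢ). In particular, if A and B have no common eigenvalue, then P_{A,B} is bijective. -/

import Mathlib

open Polynomial

/-- The Sylvester-type linear map `X ↦ X·B − A·X` on the space of `m₁ × m₂` matrices. -/
def sylvLMap (R : Type*) [CommRing R] (m₁ m₂ : ℕ)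
    (A : Matrix (Fin m₁) (Fin m₁) R) (B : Matrix (Fin m₂) (Fin m₂) R) :
    Matrix (Fin m₁) (Fin m₂) R →ₗ[R] Matrix (Fin m₁) (Fin m₂) R where
  toFun X := X * B - A * X
  map_add' X Y := by
    simp only [Matrix.add_mul, Matrix.mul_add]
    abel
  map_smul' c X := by
    simp only [Matrix.smul_mul, Matrix.mul_smul, smul_sub, RingHom.id_apply]

section Aux

open Matrix
open Module

variable {k : Type*} [Field k]

lemma sylvAux_stdBasis_repr {m n : Type*} [Fintype m] [Fintype n] [DecidableEq m] [DecidableEq n]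
    (X : Matrix m n k) (i : m) (j : n) :
    (Matrix.stdBasis k m n).repr X (i, j) = X i j := by
  have h : (Finsupp.lapply (i, j) ∘ₗ (Matrix.stdBasis k m n).repr.toLinearMap : Matrix m n k →ₗ[k] k)
      = LinearMap.proj j ∘ₗ (LinearMap.proj i ∘ₗ (Matrix.ofLinearEquiv k).symm.toLinearMap) := by
    apply (Matrix.stdBasis k m n).ext
    rintro ⟨p, q⟩
    simp [Matrix.stdBasis_eq_single, Finsupp.single_apply, Matrix.single,
      Prod.ext_iff, Matrix.ofLinearEquiv]
    aesop
  have := LinearMap.congr_fun h X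
  simpa using this

lemma sylvAux_charpoly_toLin' {n : Type*} [Fintype n] [DecidableEq n] (M : Matrix n n k) :
    (Matrix.toLin' M).charpoly = M.charpoly := by
  rw [← LinearMap.charpoly_toMatrix (Matrix.toLin' M) (Pi.basisFun k n),
    LinearMap.toMatrix_eq_toMatrix', LinearMap.toMatrix'_toLin']

lemma sylvAux_charpoly_conj_mat {n : Type*} [Fintype n] [DecidableEq n] (M P Q : Matrix n n k)
    (h1 : P * Q = 1) (h2 : Q * P = 1) : (Q * M * P).charpoly = M.charpoly := by
  let e : (n → k) ≃ₗ[k] (n → k) :=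
    LinearEquiv.ofLinear (Matrix.toLin' Q) (Matrix.toLin' P)
      (by rw [← Matrix.toLin'_mul, h2, Matrix.toLin'_one])
      (by rw [← Matrix.toLin'_mul, h1, Matrix.toLin'_one])
  have : e.conj (Matrix.toLin' M) = Matrix.toLin' (Q * M * P) := by
    ext x
    simp [e, LinearEquiv.conj_apply, Matrix.toLin'_mul]
  rw [← sylvAux_charpoly_toLin' (Q * M * P), ← this, LinearEquiv.charpoly_conj,
    sylvAux_charpoly_toLin']

lemma sylvAux_exists_eigen [IsAlgClosed k] {n : ℕ} (M : Matrix (Fin (n + 1)) (Fin (n + 1)) k) :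
    ∃ (μ : k) (v : Fin (n + 1) → k), v ≠ 0 ∧ M *ᵥ v = μ • v := by
  obtain ⟨μ, hμ⟩ := Module.End.exists_eigenvalue (Matrix.toLin' M)
  obtain ⟨v, hv⟩ := hμ.exists_hasEigenvector
  exact ⟨μ, v, hv.right, by simpa [Matrix.toLin'_apply] using hv.apply_eq_smul⟩

lemma sylvAux_exists_basis {n : ℕ} (v : Fin (n + 1) → k) (hv : v ≠ 0) :
    ∃ b : Basis (Fin (n + 1)) k (Fin (n + 1) → k), b 0 = v := by
  have hli : LinearIndepOn k id ({v} : Set (Fin (n + 1) → k)) :=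
    LinearIndepOn.singleton hv
  let b := Basis.extend hli
  have : FiniteDimensional k (Fin (n + 1) → k) := inferInstance
  haveI : Fintype (hli.extend (Set.subset_univ _)) := FiniteDimensional.fintypeBasisIndex b
  have hcard : Fintype.card (hli.extend (Set.subset_univ _)) = n + 1 := by
    have h1 := Module.finrank_eq_card_basis b
    simpa [Module.finrank_fin_fun] using h1.symm
  have hvmem : v ∈ hli.extend (Set.subset_univ _) :=
    hli.subset_extend _ rfl
  let f : hli.extend (Set.subset_univ _) ≃ Fin (n + 1) := Fintype.equivFinOfCardEq hcard
  let g := f.trans (Equiv.swap (f ⟨v, hvmem⟩) 0)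
  refine ⟨b.reindex g, ?_⟩
  have : g.symm 0 = ⟨v, hvmem⟩ := by
    simp [g, Equiv.symm_trans_apply, Equiv.swap_apply_right]
  rw [Basis.reindex_apply, this, Basis.extend_apply_self]

lemma sylvAux_exists_triangular [IsAlgClosed k] :
    ∀ (n : ℕ) (M : Matrix (Fin n) (Fin n) k),
    ∃ P Q : Matrix (Fin n) (Fin n) k, P * Q = 1 ∧ Q * P = 1 ∧ (Q * M * P).BlockTriangular id
  | 0, M => ⟨1, 1, by simp, by simp, fun i => i.elim0⟩
  | (n+1), M => by
    obtain ⟨μ, v, hv0, hMv⟩ := sylvAux_exists_eigen M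
    obtain ⟨b, hb0⟩ := sylvAux_exists_basis v hv0
    set U : Matrix (Fin (n+1)) (Fin (n+1)) k := (Pi.basisFun k (Fin (n+1))).toMatrix b with hU
    haveI : Invertible U := (Pi.basisFun k (Fin (n+1))).invertibleToMatrix b
    set V := ⅟U with hV
    have hUV : U * V = 1 := mul_invOf_self U
    have hVU : V * U = 1 := invOf_mul_self U
    have hUe : U *ᵥ Pi.single 0 1 = v := by
      ext i
      simp [hU, Matrix.mulVec_single, Basis.toMatrix_apply, hb0]
    set N := V * M * U with hN
    have hNe : N *ᵥ Pi.single 0 1 = μ • (Pi.single 0 1 : Fin (n+1) → k) := by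
      rw [hN, ← Matrix.mulVec_mulVec, ← Matrix.mulVec_mulVec, hUe, hMv, Matrix.mulVec_smul,
        ← hUe, Matrix.mulVec_mulVec, hVU, Matrix.one_mulVec]
    have hNcol : ∀ i : Fin (n+1), i ≠ 0 → N i 0 = 0 := by
      intro i hi
      have h1 : (N *ᵥ Pi.single 0 1) i = N i 0 := by simp [Matrix.mulVec_single]
      rw [hNe] at h1
      simpa [Pi.single_apply, hi] using h1.symm
    set M' := N.submatrix Fin.succ Fin.succ with hM'
    obtain ⟨P', Q', h1', h2', ht'⟩ := sylvAux_exists_triangular n M'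
    let e : Fin 1 ⊕ Fin n ≃ Fin (n+1) := finSumFinEquiv.trans (finCongr (Nat.add_comm 1 n))
    have he0 : ∀ i1 : Fin 1, e (Sum.inl i1) = 0 := by
      intro i1
      apply Fin.ext
      simp [e, finSumFinEquiv, Fin.ext_iff]
    have hes : ∀ j : Fin n, e (Sum.inr j) = j.succ := by
      intro j
      apply Fin.ext
      simp [e, finSumFinEquiv, Fin.ext_iff, Nat.add_comm 1 j.val]
    set P2 := (fromBlocks (1 : Matrix (Fin 1) (Fin 1) k) 0 0 P').submatrix e.symm e.symm with hP2
    set Q2 := (fromBlocks (1 : Matrix (Fin 1) (Fin 1) k) 0 0 Q').submatrix e.symm e.symm with hQ2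
    have hP2Q2 : P2 * Q2 = 1 := by
      rw [hP2, hQ2, Matrix.submatrix_mul_equiv]
      simp [fromBlocks_multiply, h1', Matrix.fromBlocks_one]
    have hQ2P2 : Q2 * P2 = 1 := by
      rw [hP2, hQ2, Matrix.submatrix_mul_equiv]
      simp [fromBlocks_multiply, h2', Matrix.fromBlocks_one]
    refine ⟨U * P2, Q2 * V, ?_, ?_, ?_⟩
    · rw [Matrix.mul_assoc, ← Matrix.mul_assoc P2 Q2 V, hP2Q2, Matrix.one_mul, hUV]
    · rw [Matrix.mul_assoc, ← Matrix.mul_assoc V U P2, hVU, Matrix.one_mul, hQ2P2]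
    · have h21 : (N.submatrix e e).toBlocks₂₁ = 0 := by
        ext i j
        have := hNcol (Fin.succ i) (Fin.succ_ne_zero i)
        simp [Matrix.toBlocks₂₁, hes, he0, this]
      have h22 : (N.submatrix e e).toBlocks₂₂ = M' := by
        ext i j
        simp [Matrix.toBlocks₂₂, hes, hM']
      set G := fromBlocks ((N.submatrix e e).toBlocks₁₁) (((N.submatrix e e).toBlocks₁₂) * P')
          0 (Q' * M' * P') with hG
      have key : Q2 * V * M * (U * P2) = G.submatrix e.symm e.symm := by
        have hNsub : N = (N.submatrix e e).submatrix e.symm e.symm := by simp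
        calc Q2 * V * M * (U * P2) = Q2 * N * P2 := by
              rw [hN]; simp only [Matrix.mul_assoc]
          _ = Q2 * (N.submatrix e e).submatrix e.symm e.symm * P2 := by rw [← hNsub]
          _ = G.submatrix e.symm e.symm := by
              rw [hP2, hQ2, Matrix.submatrix_mul_equiv, Matrix.submatrix_mul_equiv]
              conv_lhs => rw [← Matrix.fromBlocks_toBlocks (N.submatrix e e), h21, h22]
              rw [hG]
              simp [fromBlocks_multiply, Matrix.mul_assoc]
      rw [key, ← Matrix.reindex_apply, blockTriangular_reindex_iff]
      rintro (i1 | i) (j1 | j) hij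
      · exact absurd hij (by simp [he0])
      · exact absurd hij (by simp [he0, hes])
      · simp [hG, Matrix.fromBlocks_apply₂₁]
      · have hji : j < i := by
          have := hij
          simp only [Function.comp_apply, id_eq, hes] at this
          exact Fin.succ_lt_succ_iff.mp this
        simpa [hG, Matrix.fromBlocks_apply₂₂] using ht' hji

lemma sylvAux_toMatrix_entry (m₁ m₂ : ℕ) (A : Matrix (Fin m₁) (Fin m₁) k)
    (B : Matrix (Fin m₂) (Fin m₂) k) (i p : Fin m₁) (j q : Fin m₂) :
    (LinearMap.toMatrix (Matrix.stdBasis k (Fin m₁) (Fin m₂))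
      (Matrix.stdBasis k (Fin m₁) (Fin m₂)) (sylvLMap k m₁ m₂ A B)) (i, j) (p, q)
      = (if p = i then B q j else 0) - (if q = j then A i p else 0) := by
  rw [LinearMap.toMatrix_apply, Matrix.stdBasis_eq_single, sylvAux_stdBasis_repr]
  simp [sylvLMap, Matrix.mul_apply, Matrix.single, ite_and]

lemma sylvAux_tri_charpoly (m₁ m₂ : ℕ) (A : Matrix (Fin m₁) (Fin m₁) k)
    (B : Matrix (Fin m₂) (Fin m₂) k)
    (hA : A.BlockTriangular id) (hB : B.BlockTriangular id) :
    (sylvLMap k m₁ m₂ A B).charpoly = ∏ i, ∏ j, (X - C (B j j - A i i)) := by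
  classical
  set sb := Matrix.stdBasis k (Fin m₁) (Fin m₂) with hsb
  set Mm := LinearMap.toMatrix sb sb (sylvLMap k m₁ m₂ A B) with hMm
  let e : (Fin m₁ × Fin m₂) ≃ ((Fin m₂)ᵒᵈ ×ₗ (Fin m₁)) :=
    ⟨fun x => toLex (OrderDual.toDual x.2, x.1),
     fun y => ((ofLex y).2, OrderDual.ofDual (ofLex y).1),
     fun x => rfl, fun y => rfl⟩
  have htri : BlockTriangular (reindex e e Mm) id := by
    rw [blockTriangular_reindex_iff]
    rintro ⟨i, j⟩ ⟨p, q⟩ h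
    have h' : j < q ∨ (q = j ∧ p < i) := by
      rcases Prod.Lex.lt_iff.mp h with h1 | ⟨h1, h2⟩
      · exact Or.inl h1
      · exact Or.inr ⟨congrArg OrderDual.ofDual h1, h2⟩
    rw [hMm, sylvAux_toMatrix_entry]
    rcases h' with h1 | ⟨h1, h2⟩
    · have hqj : q ≠ j := by rintro rfl; exact lt_irrefl _ h1
      simp [hqj, hB h1]
    · have hpi : p ≠ i := ne_of_lt h2
      simp [hpi, h1, hA h2]
  have h1 : (sylvLMap k m₁ m₂ A B).charpoly = Mm.charpoly :=
    (LinearMap.charpoly_toMatrix _ _).symm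
  rw [h1, ← Matrix.charpoly_reindex e Mm, Matrix.charpoly_of_upperTriangular _ htri]
  rw [← Equiv.prod_comp e fun x => X - C ((reindex e e Mm) x x)]
  have hdiag : ∀ y : Fin m₁ × Fin m₂,
      (X - C ((reindex e e Mm) (e y) (e y))) = X - C (B y.2 y.2 - A y.1 y.1) := by
    rintro ⟨i, j⟩
    rw [Matrix.reindex_apply, Matrix.submatrix_apply, Equiv.symm_apply_apply, hMm]
    rw [show ((i, j) : Fin m₁ × Fin m₂) = (i, j) from rfl, sylvAux_toMatrix_entry]
    simp
  rw [Finset.prod_congr rfl fun y _ => hdiag y]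
  rw [Fintype.prod_prod_type]

lemma sylvAux_multiset_eq {m : ℕ} (a c : Fin m → k)
    (h : ∏ i, (X - C (a i)) = ∏ i, (X - C (c i))) :
    Finset.univ.val.map a = Finset.univ.val.map c := by
  have h2 := congrArg Polynomial.roots h
  rwa [Finset.prod_eq_multiset_prod, Finset.prod_eq_multiset_prod,
    show (Finset.univ.val.map fun i => X - C (a i))
        = (Finset.univ.val.map a).map (fun r => X - C r) by rw [Multiset.map_map]; rfl,
    show (Finset.univ.val.map fun i => X - C (c i))
        = (Finset.univ.val.map c).map (fun r => X - C r) by rw [Multiset.map_map]; rfl,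
    roots_multiset_prod_X_sub_C, roots_multiset_prod_X_sub_C] at h2

lemma sylvAux_double_prod {m₁ m₂ : ℕ} (f : Fin m₁ → k) (g : Fin m₂ → k) :
    ∏ i, ∏ j, (X - C (g j - f i)) =
      ((Finset.univ.val.map f).bind
        (fun a => (Finset.univ.val.map g).map (fun b => X - C (b - a)))).prod := by
  rw [Multiset.prod_bind, Multiset.map_map, Finset.prod_eq_multiset_prod]
  congr 1
  apply Multiset.map_congr rfl
  intro i _
  simp only [Function.comp_apply]
  rw [Multiset.map_map, Finset.prod_eq_multiset_prod]
  rfl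

end Aux

/-- **Characteristic polynomial of the Sylvester map.**
Over an algebraically closed field `k`, if `A` has characteristic polynomial `∏ᵢ (t − αᵢ)`
and `B` has characteristic polynomial `∏ⱼ (t − βⱼ)`, then the endomorphism
`X ↦ X·B − A·X` of the space of `m₁ × m₂` matrices has characteristic polynomial
`∏_{i,j} (t − βⱼ + αᵢ)`; in particular it is bijective when `A` and `B` have no common
eigenvalue. -/
theorem charpoly_sylvLMap
    (k : Type*) [Field k] [IsAlgClosed k] (m₁ m₂ : ℕ)
    (A : Matrix (Fin m₁) (Fin m₁) k) (B : Matrix (Fin m₂) (Fin m₂) k)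
    (α : Fin m₁ → k) (β : Fin m₂ → k)
    (hA : A.charpoly = ∏ i, (X - C (α i)))
    (hB : B.charpoly = ∏ j, (X - C (β j))) :
    (sylvLMap k m₁ m₂ A B).charpoly = ∏ i, ∏ j, (X - C (β j - α i)) ∧
    ((∀ i j, α i ≠ β j) → Function.Bijective (sylvLMap k m₁ m₂ A B)) := by
  classical
  obtain ⟨PA, QA, hPQA, hQPA, htA⟩ := sylvAux_exists_triangular m₁ A
  obtain ⟨PB, QB, hPQB, hQPB, htB⟩ := sylvAux_exists_triangular m₂ B
  set TA := QA * A * PA with hTA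
  set TB := QB * B * PB with hTB
  have hcA : ∏ i, (X - C (TA i i)) = ∏ i, (X - C (α i)) := by
    rw [← Matrix.charpoly_of_upperTriangular _ htA, hTA,
      sylvAux_charpoly_conj_mat A PA QA hPQA hQPA, hA]
  have hcB : ∏ j, (X - C (TB j j)) = ∏ j, (X - C (β j)) := by
    rw [← Matrix.charpoly_of_upperTriangular _ htB, hTB,
      sylvAux_charpoly_conj_mat B PB QB hPQB hQPB, hB]
  have hmsA := sylvAux_multiset_eq _ _ hcA
  have hmsB := sylvAux_multiset_eq _ _ hcB
  -- conjugation equivalence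
  let φ : Matrix (Fin m₁) (Fin m₂) k ≃ₗ[k] Matrix (Fin m₁) (Fin m₂) k :=
    LinearEquiv.ofLinear
      { toFun := fun X => QA * X * PB
        map_add' := fun X Y => by simp [Matrix.mul_add, Matrix.add_mul]
        map_smul' := fun c X => by simp [Matrix.mul_smul, Matrix.smul_mul] }
      { toFun := fun X => PA * X * QB
        map_add' := fun X Y => by simp [Matrix.mul_add, Matrix.add_mul]
        map_smul' := fun c X => by simp [Matrix.mul_smul, Matrix.smul_mul] }
      (by
        apply LinearMap.ext; intro X
        show QA * (PA * X * QB) * PB = X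
        calc QA * (PA * X * QB) * PB = QA * PA * (X * (QB * PB)) := by
              simp only [Matrix.mul_assoc]
          _ = X := by rw [hQPA, hQPB, Matrix.one_mul, Matrix.mul_one])
      (by
        apply LinearMap.ext; intro X
        show PA * (QA * X * PB) * QB = X
        calc PA * (QA * X * PB) * QB = PA * QA * (X * (PB * QB)) := by
              simp only [Matrix.mul_assoc]
          _ = X := by rw [hPQA, hPQB, Matrix.one_mul, Matrix.mul_one])
  have hconj : φ.conj (sylvLMap k m₁ m₂ A B) = sylvLMap k m₁ m₂ TA TB := by
    apply LinearMap.ext; intro X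
    rw [LinearEquiv.conj_apply]
    show QA * ((PA * X * QB) * B - A * (PA * X * QB)) * PB = X * TB - TA * X
    rw [Matrix.mul_sub, Matrix.sub_mul, hTA, hTB]
    congr 1
    · calc QA * (PA * X * QB * B) * PB = QA * PA * (X * (QB * B * PB)) := by
            simp only [Matrix.mul_assoc]
        _ = X * (QB * B * PB) := by rw [hQPA, Matrix.one_mul]
    · calc QA * (A * (PA * X * QB)) * PB = QA * A * PA * (X * (QB * PB)) := by
            simp only [Matrix.mul_assoc]
        _ = QA * A * PA * X := by rw [hQPB, Matrix.mul_one]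
  have hchar : (sylvLMap k m₁ m₂ A B).charpoly = ∏ i, ∏ j, (X - C (β j - α i)) := by
    rw [← LinearEquiv.charpoly_conj φ, hconj, sylvAux_tri_charpoly _ _ _ _ htA htB,
      sylvAux_double_prod, hmsA, hmsB, ← sylvAux_double_prod]
  refine ⟨hchar, fun hne => ?_⟩
  have hconst : Polynomial.constantCoeff (sylvLMap k m₁ m₂ A B).charpoly ≠ 0 := by
    rw [hchar]
    simp only [map_prod, constantCoeff_apply, coeff_sub, coeff_X_zero, coeff_C_zero, zero_sub]
    rw [Finset.prod_ne_zero_iff]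
    intro i _
    rw [Finset.prod_ne_zero_iff]
    intro j _
    simp only [ne_eq, neg_eq_zero, sub_eq_zero]
    exact fun h => hne i j h.symm
  have hinj : Function.Injective (sylvLMap k m₁ m₂ A B) := by
    rw [← LinearMap.ker_eq_bot]
    rw [Submodule.eq_bot_iff]
    intro X hX
    by_contra hX0
    exact hconst ((LinearMap.charpoly_constantCoeff_eq_zero_iff _).mpr ⟨X, hX0, hX⟩)
  exact ⟨hinj, (LinearMap.injective_iff_surjective).mp hinj⟩
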